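/- Let K be a field of prime characteristic p and for k ≥ 0 set τ_k = Σ_{r=0}^{k} X^{(p+1)p^r} ∈ K[X]. Then ∂_{p^k}(τ_k) = X^p if k = 0, and ∂_{p^k}(τ_k) = X^{p^{k+1}} + X^{p^{k−1}} if k ≥ 1. (This is Lemma 4.1(a) of the paper, stated for τ_k = −σ_k; the overall sign does not affect any of the paper's conclusions.) -/

import Mathlib

open Polynomial

private lemma choose_mul_pow_modeq (p : ℕ) [Fact p.Prime] (m n s : ℕ) :
    (m * p ^ s).choose (n * p ^ s) ≡ m.choose n [MOD p] := by
  induction s with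
  | zero => simp [Nat.ModEq.refl]
  | succ s ih =>
    have hp : 0 < p := (Fact.out : p.Prime).pos
    have h := Choose.choose_modEq_choose_mod_mul_choose_div_nat
      (p := p) (n := m * p ^ (s + 1)) (k := n * p ^ (s + 1))
    have e1 : m * p ^ (s + 1) = m * p ^ s * p := by ring
    have e2 : n * p ^ (s + 1) = n * p ^ s * p := by ring
    rw [e1, e2] at h ⊢
    rw [Nat.mul_mod_left, Nat.mul_mod_left, Nat.mul_div_cancel _ hp, Nat.mul_div_cancel _ hp,
      Nat.choose_self, one_mul] at h
    exact h.trans ih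

private lemma hd_term (K : Type*) [Field K] (p : ℕ) [Fact p.Prime] [CharP K p] (r t : ℕ) :
    Polynomial.hasseDeriv t ((X : K[X]) ^ ((p + 1) * p ^ r)) =
      C ((((p + 1) * p ^ r).choose t : K)) * X ^ ((p + 1) * p ^ r - t) := by
  rw [← Polynomial.monomial_one_right_eq_X_pow, Polynomial.hasseDeriv_monomial, mul_one,
    ← Polynomial.C_mul_X_pow_eq_monomial]

theorem hasseDeriv_tau (K : Type*) [Field K] (p : ℕ) [Fact p.Prime] [CharP K p] :
    Polynomial.hasseDeriv (p ^ 0)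
        (∑ r ∈ Finset.range (0 + 1), (X : K[X]) ^ ((p + 1) * p ^ r)) = X ^ p ∧
    ∀ k : ℕ, 1 ≤ k →
      Polynomial.hasseDeriv (p ^ k)
          (∑ r ∈ Finset.range (k + 1), (X : K[X]) ^ ((p + 1) * p ^ r)) =
        X ^ (p ^ (k + 1)) + X ^ (p ^ (k - 1)) := by
  have hp : p.Prime := Fact.out
  have hone : ((p + 1 : ℕ) : K) = 1 := by
    push_cast [CharP.cast_eq_zero K p]; ring
  constructor
  · rw [zero_add, Finset.sum_range_one, hd_term]
    simp [hone, Nat.choose_one_right]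
  · intro k hk
    obtain ⟨j, rfl⟩ : ∃ j, k = j + 1 := ⟨k - 1, (Nat.succ_pred_eq_of_pos hk).symm⟩
    rw [map_sum, Finset.sum_range_succ, Finset.sum_range_succ]
    have hsmall : ∀ r ∈ Finset.range j,
        Polynomial.hasseDeriv (p ^ (j + 1)) ((X : K[X]) ^ ((p + 1) * p ^ r)) = 0 := by
      intro r hr
      have hrj : r < j := Finset.mem_range.mp hr
      rw [hd_term]
      have hlt : (p + 1) * p ^ r < p ^ (j + 1) := by
        have h1 : p + 1 < p ^ 2 := by nlinarith [hp.two_le]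
        calc (p + 1) * p ^ r < p ^ 2 * p ^ r :=
              Nat.mul_lt_mul_of_lt_of_le h1 le_rfl (pow_pos hp.pos r)
          _ = p ^ (r + 2) := by ring
          _ ≤ p ^ (j + 1) := Nat.pow_le_pow_right hp.pos (by omega)
      rw [Nat.choose_eq_zero_of_lt hlt]
      simp
    rw [Finset.sum_eq_zero hsmall, zero_add]
    have hj : Polynomial.hasseDeriv (p ^ (j + 1)) ((X : K[X]) ^ ((p + 1) * p ^ j)) =
        X ^ (p ^ j) := by
      rw [hd_term, pow_succ']
      have h2 := choose_mul_pow_modeq p (p + 1) p j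
      rw [(CharP.natCast_eq_natCast K p).mpr h2, Nat.choose_succ_self_right, hone,
        add_mul, one_mul, Nat.add_sub_cancel_left, map_one, one_mul]
    have hj1 : Polynomial.hasseDeriv (p ^ (j + 1)) ((X : K[X]) ^ ((p + 1) * p ^ (j + 1))) =
        X ^ (p ^ (j + 2)) := by
      have h2 := choose_mul_pow_modeq p (p + 1) 1 (j + 1)
      rw [one_mul] at h2
      have hc : ((((p + 1) * p ^ (j + 1)).choose (p ^ (j + 1)) : ℕ) : K) = 1 := by
        rw [(CharP.natCast_eq_natCast K p).mpr h2, Nat.choose_one_right, hone]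
      rw [hd_term, hc, map_one, one_mul]
      congr 1
      rw [add_mul, one_mul, Nat.add_sub_cancel, ← pow_succ']
    rw [hj, hj1, Nat.add_sub_cancel, add_comm]
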